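/- In the 3-VAS V = {(0,1,1), (1,2,−1), (1,−1,2)}, for every n ∈ ℕ the vector (2n, n+1, n+1) is reachable (via the path (0,1,1), ((1,2,−1),(1,−1,2))ⁿ), but for every n ≥ 1 the vector (2n, n+1, n+1) is not box-reachable. Consequently, there exist reachable vectors arbitrarily deep in the positive octant that are not box-reachable, so the reachability set and box-reachability set of a 3-VAS need not coincide on any set of the form [W,∞)³. -/

import Mathlib

/-- `t` is reachable in the `d`-VAS `V` via the specific path `π`. -/
def ReachVia {d : ℕ} (V : Finset (Fin d → ℤ)) (π : List (Fin d → ℤ))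
    (t : Fin d → ℤ) : Prop :=
  (∀ v ∈ π, v ∈ V) ∧ π.sum = t ∧
    ∀ j : ℕ, ∀ i : Fin d, 0 ≤ ((π.take j).sum) i

/-- `t` is reachable in the `d`-VAS `V`. -/
def Reach {d : ℕ} (V : Finset (Fin d → ℤ)) (t : Fin d → ℤ) : Prop :=
  ∃ π : List (Fin d → ℤ), ReachVia V π t

/-- `t` is box-reachable in the `d`-VAS `V`. -/
def BoxReach {d : ℕ} (V : Finset (Fin d → ℤ)) (t : Fin d → ℤ) : Prop :=
  ∃ π : List (Fin d → ℤ), (∀ v ∈ π, v ∈ V) ∧ π.sum = t ∧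
    ∀ j : ℕ, ∀ i : Fin d, 0 ≤ ((π.take j).sum) i ∧ ((π.take j).sum) i ≤ t i

namespace VAS3aux

def vA : Fin 3 → ℤ := ![0, 1, 1]
def vB : Fin 3 → ℤ := ![1, 2, -1]
def vC : Fin 3 → ℤ := ![1, -1, 2]

lemma vA0 : vA 0 = 0 := rfl
lemma vA1 : vA 1 = 1 := rfl
lemma vA2 : vA 2 = 1 := rfl
lemma vB0 : vB 0 = 1 := rfl
lemma vB1 : vB 1 = 2 := rfl
lemma vB2 : vB 2 = -1 := rfl
lemma vC0 : vC 0 = 1 := rfl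
lemma vC1 : vC 1 = -1 := rfl
lemma vC2 : vC 2 = 2 := rfl

lemma vA_ne_vB : vA ≠ vB := by
  intro h; have := congrFun h 0; rw [vA0, vB0] at this; exact absurd this (by norm_num)

lemma vA_ne_vC : vA ≠ vC := by
  intro h; have := congrFun h 0; rw [vA0, vC0] at this; exact absurd this (by norm_num)

lemma vB_ne_vC : vB ≠ vC := by
  intro h; have := congrFun h 1; rw [vB1, vC1] at this; exact absurd this (by norm_num)

def VV : Finset (Fin 3 → ℤ) := {vA, vB, vC}

def rest (n : ℕ) : List (Fin 3 → ℤ) := (List.replicate n [vB, vC]).flatten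

lemma rest_succ (n : ℕ) : rest (n + 1) = vB :: vC :: rest n := by
  simp [rest, List.replicate_succ]

lemma rest_mem (n : ℕ) : ∀ v ∈ rest n, v = vB ∨ v = vC := by
  induction n with
  | zero => simp [rest]
  | succ n ih =>
    rw [rest_succ]
    intro v hv
    rw [List.mem_cons, List.mem_cons] at hv
    rcases hv with h | h | h
    · exact Or.inl h
    · exact Or.inr h
    · exact ih v h

lemma rest_sum (n : ℕ) :
    (rest n).sum 0 = 2 * n ∧ (rest n).sum 1 = n ∧ (rest n).sum 2 = n := by
  induction n with
  | zero => exact ⟨rfl, rfl, rfl⟩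
  | succ n ih =>
    obtain ⟨h0, h1, h2⟩ := ih
    rw [rest_succ]
    simp only [List.sum_cons, Pi.add_apply, h0, h1, h2, vB0, vB1, vB2, vC0, vC1, vC2]
    push_cast
    refine ⟨by ring, by ring, by ring⟩

lemma rest_take (n j : ℕ) :
    0 ≤ ((rest n).take j).sum 0 ∧ -1 ≤ ((rest n).take j).sum 1 ∧
      -1 ≤ ((rest n).take j).sum 2 := by
  induction n generalizing j with
  | zero => simp [rest]
  | succ n ih =>
    rw [rest_succ]
    match j with
    | 0 => simp
    | 1 =>
      simp only [List.take_succ_cons, List.take_zero, List.sum_cons, List.sum_nil,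
        Pi.add_apply, Pi.zero_apply, vB0, vB1, vB2]
      norm_num
    | (j + 2) =>
      obtain ⟨h0, h1, h2⟩ := ih j
      rw [List.take_succ_cons, List.take_succ_cons]
      simp only [List.sum_cons, Pi.add_apply, vB0, vB1, vB2, vC0, vC1, vC2]
      refine ⟨by omega, by omega, by omega⟩

lemma memVV (v : Fin 3 → ℤ) : v ∈ VV ↔ v = vA ∨ v = vB ∨ v = vC := by
  simp [VV]

/-- the path for part 1 -/
def pathN (n : ℕ) : List (Fin 3 → ℤ) := vA :: rest n

lemma part1 (n : ℕ) :
    ReachVia VV (pathN n) ![2 * (n : ℤ), (n : ℤ) + 1, (n : ℤ) + 1] := by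
  obtain ⟨h0, h1, h2⟩ := rest_sum n
  refine ⟨?_, ?_, ?_⟩
  · intro v hv
    rw [memVV]
    rw [pathN, List.mem_cons] at hv
    rcases hv with h | h
    · exact Or.inl h
    · exact Or.inr (rest_mem n v h)
  · funext i
    fin_cases i
    · show vA 0 + (rest n).sum 0 = 2 * (n : ℤ)
      rw [vA0, h0]; ring
    · show vA 1 + (rest n).sum 1 = (n : ℤ) + 1
      rw [vA1, h1]; ring
    · show vA 2 + (rest n).sum 2 = (n : ℤ) + 1
      rw [vA2, h2]; ring
  · intro j i
    match j with
    | 0 => simp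
    | (j + 1) =>
      obtain ⟨g0, g1, g2⟩ := rest_take n j
      rw [pathN, List.take_succ_cons]
      fin_cases i
      · show 0 ≤ vA 0 + ((rest n).take j).sum 0
        rw [vA0]; omega
      · show 0 ≤ vA 1 + ((rest n).take j).sum 1
        rw [vA1]; omega
      · show 0 ≤ vA 2 + ((rest n).take j).sum 2
        rw [vA2]; omega

lemma count_sum (l : List (Fin 3 → ℤ)) (h : ∀ v ∈ l, v = vA ∨ v = vB ∨ v = vC)
    (i : Fin 3) :
    l.sum i = (l.count vA : ℤ) * vA i + (l.count vB : ℤ) * vB i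
      + (l.count vC : ℤ) * vC i := by
  induction l with
  | nil => simp
  | cons x t ih =>
    have hx := h x List.mem_cons_self
    have ht : ∀ v ∈ t, v = vA ∨ v = vB ∨ v = vC := fun v hv => h v (List.mem_cons_of_mem x hv)
    have iht := ih ht
    rcases hx with rfl | rfl | rfl <;>
      · simp only [List.sum_cons, Pi.add_apply, List.count_cons, beq_iff_eq, iht,
          vA_ne_vB, vA_ne_vC, vB_ne_vC, vA_ne_vB.symm, vA_ne_vC.symm, vB_ne_vC.symm,
          if_true, if_false, eq_self_iff_true, ite_true, ite_false, Ne.symm]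
        push_cast
        ring

lemma count_length (l : List (Fin 3 → ℤ))
    (h : ∀ v ∈ l, v = vA ∨ v = vB ∨ v = vC) :
    l.count vA + l.count vB + l.count vC = l.length := by
  induction l with
  | nil => simp
  | cons x t ih =>
    have hx := h x List.mem_cons_self
    have ht : ∀ v ∈ t, v = vA ∨ v = vB ∨ v = vC := fun v hv => h v (List.mem_cons_of_mem x hv)
    have iht := ih ht
    rcases hx with rfl | rfl | rfl <;>
      · simp only [List.count_cons, beq_iff_eq, List.length_cons,
          vA_ne_vB, vA_ne_vC, vB_ne_vC, vA_ne_vB.symm, vA_ne_vC.symm, vB_ne_vC.symm,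
          if_true, if_false, eq_self_iff_true, ite_true, ite_false]
        omega

lemma part2 (n : ℕ) (hn : 1 ≤ n) :
    ¬ BoxReach VV ![2 * (n : ℤ), (n : ℤ) + 1, (n : ℤ) + 1] := by
  rintro ⟨π, hmem, hsum, hbox⟩
  have eT0 : (![2 * (n : ℤ), (n : ℤ) + 1, (n : ℤ) + 1] : Fin 3 → ℤ) 0 = 2 * n := rfl
  have eT1 : (![2 * (n : ℤ), (n : ℤ) + 1, (n : ℤ) + 1] : Fin 3 → ℤ) 1 = (n : ℤ) + 1 := rfl
  have eT2 : (![2 * (n : ℤ), (n : ℤ) + 1, (n : ℤ) + 1] : Fin 3 → ℤ) 2 = (n : ℤ) + 1 := rfl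
  have hmem' : ∀ v ∈ π, v = vA ∨ v = vB ∨ v = vC := fun v hv => (memVV v).mp (hmem v hv)
  have h0 := count_sum π hmem' 0
  have h1 := count_sum π hmem' 1
  have h2 := count_sum π hmem' 2
  rw [hsum, eT0, vA0, vB0, vC0] at h0
  rw [hsum, eT1, vA1, vB1, vC1] at h1
  rw [hsum, eT2, vA2, vB2, vC2] at h2
  have hlen := count_length π hmem'
  have hA : π.count vA = 1 := by omega
  have hL : π.length = 2 * n + 1 := by omega
  obtain ⟨x, t, rfl⟩ : ∃ x t, π = x :: t := by
    cases π with
    | nil => simp at hL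
    | cons x t => exact ⟨x, t, rfl⟩
  have hx : x = vA := by
    rcases hmem' x List.mem_cons_self with h | rfl | rfl
    · exact h
    · have hb := (hbox 1 2).1
      have : ((vB :: t).take 1).sum 2 = vB 2 := by
        rw [List.take_succ_cons, List.take_zero, List.sum_cons, List.sum_nil, add_zero]
      rw [this, vB2] at hb
      exact absurd hb (by norm_num)
    · have hb := (hbox 1 1).1
      have : ((vC :: t).take 1).sum 1 = vC 1 := by
        rw [List.take_succ_cons, List.take_zero, List.sum_cons, List.sum_nil, add_zero]
      rw [this, vC1] at hb
      exact absurd hb (by norm_num)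
  subst hx
  set p : List (Fin 3 → ℤ) := (vA :: t).take (2 * n) with hp
  have hpmem : ∀ v ∈ p, v = vA ∨ v = vB ∨ v = vC :=
    fun v hv => hmem' v (List.mem_of_mem_take hv)
  have hplen : p.length = 2 * n := by
    rw [hp, List.length_take, hL]; omega
  have hpA : p.count vA = 1 := by
    have hle : p.count vA ≤ (vA :: t).count vA := (List.take_sublist _ _).count_le vA
    have h1' : 1 ≤ p.count vA := by
      obtain ⟨m, hm⟩ : ∃ m, 2 * n = m + 1 := ⟨2 * n - 1, by omega⟩
      rw [hp, hm, List.take_succ_cons]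
      simp [List.count_cons]
    omega
  have hplen' := count_length p hpmem
  have hy := count_sum p hpmem 1
  have hz := count_sum p hpmem 2
  rw [vA1, vB1, vC1] at hy
  rw [vA2, vB2, vC2] at hz
  have hb1 := hbox (2 * n) 1
  have hb2 := hbox (2 * n) 2
  rw [← hp, eT1] at hb1
  rw [← hp, eT2] at hb2
  omega

end VAS3aux

/-- In the 3-VAS `{(0,1,1), (1,2,−1), (1,−1,2)}`: every `(2n, n+1, n+1)` is
reachable via the path `(0,1,1), ((1,2,−1),(1,−1,2))ⁿ`, but not box-reachable
for `n ≥ 1`; consequently there are reachable vectors arbitrarily deep in the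
positive octant that are not box-reachable. -/
theorem example_3VAS_reach_not_boxReach :
    (∀ n : ℕ,
      ReachVia ({![(0 : ℤ), 1, 1], ![1, 2, -1], ![1, -1, 2]} : Finset (Fin 3 → ℤ))
        ([![(0 : ℤ), 1, 1]] ++
          (List.replicate n [![(1 : ℤ), 2, -1], ![1, -1, 2]]).flatten)
        ![2 * (n : ℤ), (n : ℤ) + 1, (n : ℤ) + 1]) ∧
    (∀ n : ℕ, 1 ≤ n →
      ¬ BoxReach ({![(0 : ℤ), 1, 1], ![1, 2, -1], ![1, -1, 2]} : Finset (Fin 3 → ℤ))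
        ![2 * (n : ℤ), (n : ℤ) + 1, (n : ℤ) + 1]) ∧
    (∀ W : ℕ, ∃ t : Fin 3 → ℤ, (∀ i, (W : ℤ) ≤ t i) ∧
      Reach ({![(0 : ℤ), 1, 1], ![1, 2, -1], ![1, -1, 2]} : Finset (Fin 3 → ℤ)) t ∧
      ¬ BoxReach ({![(0 : ℤ), 1, 1], ![1, 2, -1], ![1, -1, 2]} : Finset (Fin 3 → ℤ)) t) := by
  refine ⟨fun n => VAS3aux.part1 n, fun n hn => VAS3aux.part2 n hn, fun W => ?_⟩
  refine ⟨![2 * ((W : ℤ) + 1), ((W : ℤ) + 1) + 1, ((W : ℤ) + 1) + 1], ?_, ?_, ?_⟩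
  · intro i
    fin_cases i
    · show (W : ℤ) ≤ 2 * ((W : ℤ) + 1); omega
    · show (W : ℤ) ≤ ((W : ℤ) + 1) + 1; omega
    · show (W : ℤ) ≤ ((W : ℤ) + 1) + 1; omega
  · have h := VAS3aux.part1 (W + 1)
    refine ⟨VAS3aux.pathN (W + 1), ?_⟩
    convert h using 2
    · rfl
    · simp
    · simp
  · have h := VAS3aux.part2 (W + 1) (by omega)
    convert h using 2
    · rfl
    · simp
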